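/- Let F be a long-tailed distribution function on ℝ. Then there exists a function d : [0,∞) → (0,∞) such that lim_{u→∞} d(u) = ∞, lim_{u→∞} d(u)/u = 0, lim_{u→∞} (1−F(u+d(u)))/(1−F(u)) = 1, and lim_{u→∞} (1−F(u−d(u)))/(1−F(u)) = 1. -/

import Mathlib

open Filter Set

/-- A distribution function on `ℝ`: monotone, right-continuous, with limits `0` at `-∞`
and `1` at `+∞`. -/
def IsDistributionFunction (F : ℝ → ℝ) : Prop :=
  Monotone F ∧ (∀ x : ℝ, ContinuousWithinAt F (Set.Ici x) x) ∧
    Tendsto F atBot (nhds 0) ∧ Tendsto F atTop (nhds 1)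

/-- A distribution function `F` is long-tailed if `1 - F(u) > 0` for all `u` and
`(1 - F(x+y))/(1 - F(x)) → 1` as `x → ∞`, for every `y`. -/
def LongTailed (F : ℝ → ℝ) : Prop :=
  (∀ u : ℝ, 0 < 1 - F u) ∧
    ∀ y : ℝ, Tendsto (fun x => (1 - F (x + y)) / (1 - F x)) atTop (nhds 1)

/-- for a long-tailed distribution function `F`, there is a function
`d : [0,∞) → (0,∞)` with `d(u) → ∞`, `d(u)/u → 0`, and
`1 - F(u ± d(u)) ∼ 1 - F(u)` as `u → ∞`. -/
theorem stmt2 (F : ℝ → ℝ) (hdf : IsDistributionFunction F) (hlt : LongTailed F) :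
    ∃ d : ℝ → ℝ, (∀ u : ℝ, 0 ≤ u → 0 < d u) ∧
      Tendsto d atTop atTop ∧
      Tendsto (fun u => d u / u) atTop (nhds 0) ∧
      Tendsto (fun u => (1 - F (u + d u)) / (1 - F u)) atTop (nhds 1) ∧
      Tendsto (fun u => (1 - F (u - d u)) / (1 - F u)) atTop (nhds 1) := by
  classical
  obtain ⟨-, hratio⟩ := hlt
  -- Step 1: for each `n`, a threshold beyond which the ratios with shift `±n` are within
  -- `1/(n+1)` of `1`.
  have key : ∀ n : ℕ, ∃ B : ℝ, ∀ x : ℝ, B ≤ x →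
      |(1 - F (x + n)) / (1 - F x) - 1| < 1 / (n + 1) ∧
      |(1 - F (x - n)) / (1 - F x) - 1| < 1 / (n + 1) := by
    intro n
    have hε : (0:ℝ) < 1 / (n + 1) := by positivity
    have e1 := (Metric.tendsto_nhds.mp (hratio (n : ℝ))) _ hε
    have e2 := (Metric.tendsto_nhds.mp (hratio (-(n : ℝ)))) _ hε
    rw [eventually_atTop] at e1 e2
    obtain ⟨B1, hB1⟩ := e1
    obtain ⟨B2, hB2⟩ := e2
    refine ⟨max B1 B2, fun x hx => ⟨?_, ?_⟩⟩
    · have := hB1 x (le_trans (le_max_left _ _) hx)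
      simpa [Real.dist_eq] using this
    · have := hB2 x (le_trans (le_max_right _ _) hx)
      rw [← sub_eq_add_neg] at this
      simpa [Real.dist_eq] using this
  choose B hB using key
  -- Step 2: an increasing sequence of thresholds `a n ≥ max (B n) (n²)`.
  set a : ℕ → ℝ := fun n =>
    Nat.rec 0 (fun k ih => max (ih + 1) (max (B (k + 1)) (((k + 1 : ℕ) : ℝ) ^ 2))) n with ha
  have haS : ∀ n : ℕ, a (n + 1) = max (a n + 1) (max (B (n + 1)) (((n + 1 : ℕ) : ℝ) ^ 2)) :=
    fun n => rfl
  have ha_sq : ∀ n : ℕ, 1 ≤ n → ((n : ℝ) ^ 2 ≤ a n ∧ B n ≤ a n) := by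
    intro n hn
    cases n with
    | zero => omega
    | succ m =>
      rw [haS]
      exact ⟨le_trans (le_max_right _ _) (le_max_right _ _),
        le_trans (le_max_left _ _) (le_max_right _ _)⟩
  have ha_ge_n : ∀ n : ℕ, (n : ℝ) ≤ a n := by
    intro n
    cases n with
    | zero => simp [ha]
    | succ m =>
      refine le_trans ?_ (ha_sq (m + 1) (by omega)).1
      have h1 : (1:ℝ) ≤ ((m + 1 : ℕ) : ℝ) := by exact_mod_cast Nat.one_le_iff_ne_zero.mpr (by omega)
      nlinarith
  -- Step 3: the index function and `d`.
  set N : ℝ → ℕ := fun u => Nat.findGreatest (fun n => a n ≤ u) ⌈u⌉₊ with hN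
  set d : ℝ → ℝ := fun u => ((max 1 (N u) : ℕ) : ℝ) with hd
  have hNlarge : ∀ n : ℕ, ∀ u : ℝ, a n ≤ u → n ≤ N u := by
    intro n u hu
    refine Nat.le_findGreatest ?_ hu
    calc n = ⌈(n : ℝ)⌉₊ := (Nat.ceil_natCast n).symm
      _ ≤ ⌈u⌉₊ := Nat.ceil_mono (le_trans (ha_ge_n n) hu)
  have hNspec : ∀ n : ℕ, ∀ u : ℝ, a n ≤ u → a (N u) ≤ u := by
    intro n u hu
    refine Nat.findGreatest_spec (P := fun k => a k ≤ u) (m := n) ?_ hu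
    calc n = ⌈(n : ℝ)⌉₊ := (Nat.ceil_natCast n).symm
      _ ≤ ⌈u⌉₊ := Nat.ceil_mono (le_trans (ha_ge_n n) hu)
  -- key combined fact: for `n ≥ 1` and `u ≥ a n`, with `m := N u` we have
  -- `n ≤ m`, `d u = m`, `a m ≤ u`.
  have main : ∀ n : ℕ, 1 ≤ n → ∀ u : ℝ, a n ≤ u →
      n ≤ N u ∧ d u = (N u : ℝ) ∧ a (N u) ≤ u := by
    intro n hn u hu
    have h1 := hNlarge n u hu
    have h2 := hNspec n u hu
    refine ⟨h1, ?_, h2⟩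
    show ((max 1 (N u) : ℕ) : ℝ) = (N u : ℝ)
    exact_mod_cast max_eq_right (le_trans hn h1)
  refine ⟨d, ?_, ?_, ?_, ?_, ?_⟩
  · intro u _
    show (0:ℝ) < ((max 1 (N u) : ℕ) : ℝ)
    have : (0:ℕ) < max 1 (N u) := lt_of_lt_of_le one_pos (le_max_left _ _)
    exact_mod_cast this
  · -- d → ∞
    rw [tendsto_atTop]
    intro b
    rw [eventually_atTop]
    set n : ℕ := max 1 ⌈b⌉₊ with hn
    refine ⟨a n, fun u hu => ?_⟩
    obtain ⟨h1, h2, -⟩ := main n (le_max_left _ _) u hu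
    rw [h2]
    calc b ≤ (⌈b⌉₊ : ℝ) := Nat.le_ceil b
      _ ≤ (n : ℝ) := by exact_mod_cast le_max_right 1 ⌈b⌉₊
      _ ≤ (N u : ℝ) := by exact_mod_cast h1
  · -- d u / u → 0
    rw [Metric.tendsto_nhds]
    intro ε hε
    rw [eventually_atTop]
    obtain ⟨n₀, hn₀⟩ := exists_nat_gt (1 / ε)
    set n : ℕ := max 1 n₀ with hn
    have hnpos : (0:ℝ) < n := by positivity
    have hinv : 1 / (n : ℝ) < ε := by
      have h1 : 1 / ε < (n : ℝ) :=
        lt_of_lt_of_le hn₀ (by exact_mod_cast le_max_right 1 n₀)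
      calc 1 / (n:ℝ) < 1 / (1/ε) := one_div_lt_one_div_of_lt (by positivity) h1
        _ = ε := one_div_one_div ε
    refine ⟨max (a n) 1, fun u hu => ?_⟩
    have hu1 : (1:ℝ) ≤ u := le_trans (le_max_right _ _) hu
    have hupos : (0:ℝ) < u := lt_of_lt_of_le one_pos hu1
    obtain ⟨h1, h2, h3⟩ := main n (le_max_left _ _) u (le_trans (le_max_left _ _) hu)
    set m : ℕ := N u with hm
    have hm1 : 1 ≤ m := le_trans (le_max_left 1 n₀) h1
    have hmpos : (0:ℝ) < m := by exact_mod_cast hm1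
    have husq : ((m : ℝ)) ^ 2 ≤ u := le_trans (ha_sq m hm1).1 h3
    have hdiv : d u / u ≤ 1 / (m : ℝ) := by
      rw [h2]
      rw [div_le_div_iff₀ hupos hmpos]
      nlinarith
    have hpos : 0 ≤ d u / u := by
      apply div_nonneg _ hupos.le
      rw [h2]; positivity
    rw [Real.dist_eq, sub_zero, abs_of_nonneg hpos]
    calc d u / u ≤ 1 / (m : ℝ) := hdiv
      _ ≤ 1 / (n : ℝ) := by
          apply one_div_le_one_div_of_le hnpos
          exact_mod_cast h1
      _ < ε := hinv
  · -- upper ratio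
    rw [Metric.tendsto_nhds]
    intro ε hε
    rw [eventually_atTop]
    obtain ⟨n₀, hn₀⟩ := exists_nat_gt (1 / ε)
    set n : ℕ := max 1 n₀ with hn
    have hnpos : (0:ℝ) < n := by positivity
    have hinv : 1 / ((n : ℝ) + 1) < ε := by
      have h1 : 1 / ε < (n : ℝ) + 1 := by
        calc 1 / ε < n₀ := hn₀
          _ ≤ (n : ℝ) := by exact_mod_cast le_max_right 1 n₀
          _ ≤ (n : ℝ) + 1 := by linarith
      rw [div_lt_iff₀ (by positivity)]
      rw [div_lt_iff₀ hε] at h1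
      linarith
    refine ⟨a n, fun u hu => ?_⟩
    obtain ⟨h1, h2, h3⟩ := main n (le_max_left _ _) u hu
    set m : ℕ := N u with hm
    have hm1 : 1 ≤ m := le_trans (le_max_left 1 n₀) h1
    have hBm : B m ≤ u := le_trans (ha_sq m hm1).2 h3
    have := (hB m u hBm).1
    rw [Real.dist_eq, h2]
    calc |(1 - F (u + (m:ℝ))) / (1 - F u) - 1| < 1 / ((m:ℝ) + 1) := this
      _ ≤ 1 / ((n:ℝ) + 1) := by
          apply one_div_le_one_div_of_le (by positivity)
          have : (n:ℝ) ≤ (m:ℝ) := by exact_mod_cast h1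
          linarith
      _ < ε := hinv
  · -- lower ratio
    rw [Metric.tendsto_nhds]
    intro ε hε
    rw [eventually_atTop]
    obtain ⟨n₀, hn₀⟩ := exists_nat_gt (1 / ε)
    set n : ℕ := max 1 n₀ with hn
    have hnpos : (0:ℝ) < n := by positivity
    have hinv : 1 / ((n : ℝ) + 1) < ε := by
      have h1 : 1 / ε < (n : ℝ) + 1 := by
        calc 1 / ε < n₀ := hn₀
          _ ≤ (n : ℝ) := by exact_mod_cast le_max_right 1 n₀
          _ ≤ (n : ℝ) + 1 := by linarith
      rw [div_lt_iff₀ (by positivity)]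
      rw [div_lt_iff₀ hε] at h1
      linarith
    refine ⟨a n, fun u hu => ?_⟩
    obtain ⟨h1, h2, h3⟩ := main n (le_max_left _ _) u hu
    set m : ℕ := N u with hm
    have hm1 : 1 ≤ m := le_trans (le_max_left 1 n₀) h1
    have hBm : B m ≤ u := le_trans (ha_sq m hm1).2 h3
    have := (hB m u hBm).2
    rw [Real.dist_eq, h2]
    calc |(1 - F (u - (m:ℝ))) / (1 - F u) - 1| < 1 / ((m:ℝ) + 1) := this
      _ ≤ 1 / ((n:ℝ) + 1) := by
          apply one_div_le_one_div_of_le (by positivity)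
          have : (n:ℝ) ≤ (m:ℝ) := by exact_mod_cast h1
          linarith
      _ < ε := hinv
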